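/- For m ∈ ℝ and v ≥ 0, let N(m, v) denote the Gaussian probability measure on ℝ with mean m and variance v (the Dirac mass at m if v = 0). Define W₂²(μ, ν) as the infimum over all couplings π of μ and ν of ∫_{ℝ×ℝ} (x − y)² dπ(x, y). Then for all m_a, m_b, m_γ ∈ ℝ, all σ_a, σ_b, σ_γ > 0, and all p_a, p_b ∈ (0, 1]: W₂²(N(m_a + m_γ, σ_a² + p_a²σ_γ²), N(m_b + m_γ, σ_b² + p_b²σ_γ²)) ≥ W₂²(N(m_a, σ_a²), N(m_b, σ_b²)) + σ_γ²·(p_a − p_b)² − 2·((σ_a·p_b·σ_γ)² + (p_a·σ_b·σ_γ)²) / √(2(σ_a·σ_b)² + 2(p_a·p_b·σ_γ²)² + (σ_a·p_b·σ_γ)² + (p_a·σ_b·σ_γ)²). -/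

import Mathlib

open MeasureTheory ProbabilityTheory

/-- The squared 2-Wasserstein distance between probability measures on `ℝ`: the infimum over all
couplings `π` of `μ` and `ν` of `∫ (x − y)² dπ(x, y)`. -/
noncomputable def W2sq (μ ν : Measure ℝ) : ℝ :=
  sInf {r : ℝ | ∃ π : Measure (ℝ × ℝ), IsProbabilityMeasure π ∧
    π.map Prod.fst = μ ∧ π.map Prod.snd = ν ∧ r = ∫ p : ℝ × ℝ, (p.1 - p.2) ^ 2 ∂π}

open Real Set
open scoped NNReal ENNReal

lemma integral_id_mul_exp (b : ℝ) (hb : 0 < b) :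
    ∫ x : ℝ, x * rexp (-b * x^2) = 0 := by
  have h := integral_neg_eq_self (fun x : ℝ => x * rexp (-b * x^2)) volume
  have h2 : (fun x : ℝ => (fun x : ℝ => x * rexp (-b * x^2)) (-x))
      = fun x : ℝ => -(x * rexp (-b * x^2)) := by
    ext x; simp only [neg_sq]; ring
  rw [h2, integral_neg] at h
  linarith

lemma integral_sq_mul_exp (b : ℝ) (hb : 0 < b) :
    ∫ x : ℝ, x^2 * rexp (-b * x^2) = b ^ (-(3:ℝ)/2) * (Real.sqrt π / 2) := by
  have h1 : ∫ x : ℝ, x^2 * rexp (-b*x^2) = 2 * ∫ x in Ioi (0:ℝ), x^2 * rexp (-b*x^2) := by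
    rw [← integral_comp_abs (f := fun x => x^2 * rexp (-b*x^2))]
    congr 1; ext x; rw [sq_abs]
  have h2 : ∫ x in Ioi (0:ℝ), x^2 * rexp (-b*x^2)
      = ∫ x in Ioi (0:ℝ), x ^ (2:ℝ) * rexp (-b * x ^ (2:ℝ)) := by
    refine setIntegral_congr_fun measurableSet_Ioi (fun x _ => ?_)
    rw [show ((2:ℝ)) = ((2:ℕ):ℝ) by norm_num, Real.rpow_natCast]
  have h3 := integral_rpow_mul_exp_neg_mul_rpow (p := 2) (q := 2) (b := b)
    (by norm_num) (by norm_num) hb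
  rw [h1, h2, h3, show (-((2:ℝ)+1)/2) = -(3:ℝ)/2 by norm_num,
    show (((2:ℝ)+1)/2) = 1/2 + 1 by norm_num, Real.Gamma_add_one (by norm_num),
    Real.Gamma_one_half_eq]
  ring

lemma gauss_integral_eq (m : ℝ) (v : ℝ≥0) (hv : v ≠ 0) (g : ℝ → ℝ) :
    ∫ x, g x ∂(gaussianReal m v) = ∫ x, gaussianPDFReal m v x * g x := by
  rw [gaussianReal_of_var_ne_zero m hv]
  have : (gaussianPDF m v) = fun x => (((gaussianPDFReal m v x).toNNReal : ℝ≥0) : ℝ≥0∞) := by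
    ext x; rfl
  rw [this, integral_withDensity_eq_integral_smul ((measurable_gaussianPDFReal m v).real_toNNReal)]
  congr 1; ext x
  simp [NNReal.smul_def, Real.coe_toNNReal _ (gaussianPDFReal_nonneg m v x)]

lemma gauss_integrable_iff (m : ℝ) (v : ℝ≥0) (hv : v ≠ 0) (g : ℝ → ℝ) :
    Integrable g (gaussianReal m v) ↔ Integrable (fun x => gaussianPDFReal m v x * g x) := by
  rw [gaussianReal_of_var_ne_zero m hv]
  have : (gaussianPDF m v) = fun x => (((gaussianPDFReal m v x).toNNReal : ℝ≥0) : ℝ≥0∞) := by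
    ext x; rfl
  rw [this, integrable_withDensity_iff_integrable_smul ((measurable_gaussianPDFReal m v).real_toNNReal)]
  constructor <;> intro h <;> refine h.congr (Filter.Eventually.of_forall fun x => ?_) <;>
    simp [NNReal.smul_def, Real.coe_toNNReal _ (gaussianPDFReal_nonneg m v x)]

lemma gaussianPDFReal_zero_eq (v : ℝ≥0) (x : ℝ) :
    gaussianPDFReal 0 v x = (Real.sqrt (2 * π * v))⁻¹ * rexp (-(2 * (v:ℝ))⁻¹ * x ^ 2) := by
  rw [gaussianPDFReal]
  congr 1
  rw [sub_zero]
  congr 1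
  rw [div_eq_inv_mul]
  ring

lemma gauss0_integrable_id (v : ℝ≥0) (hv : v ≠ 0) :
    Integrable (fun x => x) (gaussianReal 0 v) := by
  rw [gauss_integrable_iff 0 v hv]
  have hb : (0:ℝ) < (2 * (v:ℝ))⁻¹ := by
    have : (0:ℝ) < v := by exact_mod_cast pos_iff_ne_zero.mpr hv
    positivity
  have : (fun x => gaussianPDFReal 0 v x * x)
      = fun x => (Real.sqrt (2 * π * v))⁻¹ * (x * rexp (-(2 * (v:ℝ))⁻¹ * x ^ 2)) := by
    ext x; rw [gaussianPDFReal_zero_eq]; ring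
  rw [this]
  exact (integrable_mul_exp_neg_mul_sq hb).const_mul _

lemma gauss0_integrable_sq (v : ℝ≥0) (hv : v ≠ 0) :
    Integrable (fun x => x ^ 2) (gaussianReal 0 v) := by
  rw [gauss_integrable_iff 0 v hv]
  have hb : (0:ℝ) < (2 * (v:ℝ))⁻¹ := by
    have : (0:ℝ) < v := by exact_mod_cast pos_iff_ne_zero.mpr hv
    positivity
  have : (fun x => gaussianPDFReal 0 v x * x ^ 2)
      = fun x => (Real.sqrt (2 * π * v))⁻¹ * (x ^ 2 * rexp (-(2 * (v:ℝ))⁻¹ * x ^ 2)) := by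
    ext x; rw [gaussianPDFReal_zero_eq]; ring
  rw [this]
  have h2 := integrable_rpow_mul_exp_neg_mul_sq hb (s := 2) (by norm_num)
  have h3 : (fun x : ℝ => x ^ (2:ℝ) * rexp (-(2 * (v:ℝ))⁻¹ * x ^ 2))
      = fun x : ℝ => x ^ 2 * rexp (-(2 * (v:ℝ))⁻¹ * x ^ 2) := by
    ext x; rw [show ((2:ℝ)) = ((2:ℕ):ℝ) by norm_num, Real.rpow_natCast]
  rw [h3] at h2
  exact h2.const_mul _

lemma gauss0_integral_id (v : ℝ≥0) (hv : v ≠ 0) :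
    ∫ x, x ∂(gaussianReal 0 v) = 0 := by
  rw [gauss_integral_eq 0 v hv]
  have hb : (0:ℝ) < (2 * (v:ℝ))⁻¹ := by
    have : (0:ℝ) < v := by exact_mod_cast pos_iff_ne_zero.mpr hv
    positivity
  have h : (fun x => gaussianPDFReal 0 v x * x)
      = fun x => (Real.sqrt (2 * π * v))⁻¹ * (x * rexp (-(2 * (v:ℝ))⁻¹ * x ^ 2)) := by
    ext x; rw [gaussianPDFReal_zero_eq]; ring
  rw [h, integral_const_mul, integral_id_mul_exp _ hb, mul_zero]

lemma gauss0_integral_sq (v : ℝ≥0) (hv : v ≠ 0) :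
    ∫ x, x ^ 2 ∂(gaussianReal 0 v) = v := by
  rw [gauss_integral_eq 0 v hv]
  have hv' : (0:ℝ) < v := by exact_mod_cast pos_iff_ne_zero.mpr hv
  set t : ℝ := 2 * (v:ℝ) with ht_def
  have ht : (0:ℝ) < t := by positivity
  have hb : (0:ℝ) < t⁻¹ := by positivity
  have h : (fun x => gaussianPDFReal 0 v x * x ^ 2)
      = fun x => (Real.sqrt (2 * π * v))⁻¹ * (x ^ 2 * rexp (-t⁻¹ * x ^ 2)) := by
    ext x; rw [gaussianPDFReal_zero_eq]; ring
  rw [h, integral_const_mul, integral_sq_mul_exp _ hb]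
  have h2 : (t⁻¹) ^ (-(3:ℝ)/2) = t * Real.sqrt t := by
    rw [show (-(3:ℝ)/2) = -((3:ℝ)/2) by norm_num, Real.inv_rpow ht.le, Real.rpow_neg ht.le, inv_inv,
      show ((3:ℝ)/2) = 1 + 1/2 by norm_num, Real.rpow_add ht, Real.rpow_one,
      ← Real.sqrt_eq_rpow]
  have h3 : Real.sqrt (2 * π * (v:ℝ)) = Real.sqrt π * Real.sqrt t := by
    rw [show 2 * π * (v:ℝ) = π * t by rw [ht_def]; ring, Real.sqrt_mul pi_pos.le]
  rw [h2, h3]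
  have hπ : Real.sqrt π ≠ 0 := by positivity
  have hst : Real.sqrt t ≠ 0 := by positivity
  have hsq : Real.sqrt t * Real.sqrt t = t := Real.mul_self_sqrt ht.le
  field_simp
  rw [ht_def]

lemma gauss_map_eq (m : ℝ) (v : ℝ≥0) :
    (gaussianReal 0 v).map (· + m) = gaussianReal m v := by
  simpa using gaussianReal_map_add_const (μ := 0) (v := v) m

lemma gauss_integrable_id (m : ℝ) (v : ℝ≥0) (hv : v ≠ 0) :
    Integrable (fun x => x) (gaussianReal m v) := by
  rw [← gauss_map_eq m v,
    integrable_map_measure (g := fun x : ℝ => x) measurable_id'.aestronglyMeasurable (measurable_add_const m).aemeasurable]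
  exact ((gauss0_integrable_id v hv).add (integrable_const m)).congr (Filter.Eventually.of_forall fun x => rfl)

lemma gauss_integrable_sq (m : ℝ) (v : ℝ≥0) (hv : v ≠ 0) :
    Integrable (fun x => x ^ 2) (gaussianReal m v) := by
  rw [← gauss_map_eq m v,
    integrable_map_measure (by fun_prop) (measurable_add_const m).aemeasurable]
  have : Integrable (fun x : ℝ => x ^ 2 + (2 * m) * x + m ^ 2) (gaussianReal 0 v) :=
    (((gauss0_integrable_sq v hv).add ((gauss0_integrable_id v hv).const_mul _))).add
      (integrable_const _)
  exact this.congr (Filter.Eventually.of_forall fun x => by simp [Function.comp]; ring)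

lemma gauss_integral_id (m : ℝ) (v : ℝ≥0) (hv : v ≠ 0) :
    ∫ x, x ∂(gaussianReal m v) = m := by
  rw [← gauss_map_eq m v, integral_map (f := fun x : ℝ => x) (measurable_add_const m).aemeasurable
    measurable_id'.aestronglyMeasurable]
  rw [integral_add (gauss0_integrable_id v hv) (integrable_const _),
    gauss0_integral_id v hv, integral_const]
  simp

lemma gauss_integral_sq_centered (m : ℝ) (v : ℝ≥0) (hv : v ≠ 0) :
    ∫ x, (x - m) ^ 2 ∂(gaussianReal m v) = v := by
  rw [← gauss_map_eq m v, integral_map (measurable_add_const m).aemeasurable (Measurable.aestronglyMeasurable (by fun_prop))]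
  simp only [add_sub_cancel_right]
  exact gauss0_integral_sq v hv

lemma coupling_cost_ge (m1 m2 : ℝ) (v1 v2 : ℝ≥0) (h1 : v1 ≠ 0) (h2 : v2 ≠ 0)
    (P : Measure (ℝ × ℝ)) (hπP : IsProbabilityMeasure P)
    (hf : P.map Prod.fst = gaussianReal m1 v1) (hs : P.map Prod.snd = gaussianReal m2 v2) :
    (m1 - m2) ^ 2 + (Real.sqrt v1 - Real.sqrt v2) ^ 2 ≤ ∫ p : ℝ × ℝ, (p.1 - p.2) ^ 2 ∂P := by
  have hv1 : (0:ℝ) < v1 := by exact_mod_cast pos_iff_ne_zero.mpr h1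
  have hv2 : (0:ℝ) < v2 := by exact_mod_cast pos_iff_ne_zero.mpr h2
  set σ1 := Real.sqrt v1 with hσ1
  set σ2 := Real.sqrt v2 with hσ2
  have hσ1p : 0 < σ1 := Real.sqrt_pos.mpr hv1
  have hσ2p : 0 < σ2 := Real.sqrt_pos.mpr hv2
  have hσ1sq : σ1 ^ 2 = v1 := Real.sq_sqrt hv1.le
  have hσ2sq : σ2 ^ 2 = v2 := Real.sq_sqrt hv2.le
  -- integrability of coordinates
  have hX : Integrable (fun p : ℝ × ℝ => p.1) P := by
    have h := gauss_integrable_id m1 v1 h1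
    rw [← hf] at h
    exact (integrable_map_measure (g := fun x : ℝ => x) measurable_id'.aestronglyMeasurable
      measurable_fst.aemeasurable).mp h
  have hY : Integrable (fun p : ℝ × ℝ => p.2) P := by
    have h := gauss_integrable_id m2 v2 h2
    rw [← hs] at h
    exact (integrable_map_measure (g := fun x : ℝ => x) measurable_id'.aestronglyMeasurable
      measurable_snd.aemeasurable).mp h
  have hX2 : Integrable (fun p : ℝ × ℝ => p.1 ^ 2) P := by
    have h := gauss_integrable_sq m1 v1 h1
    rw [← hf] at h
    exact (integrable_map_measure (g := fun x : ℝ => x ^ 2)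
      (measurable_id'.pow_const 2).aestronglyMeasurable
      measurable_fst.aemeasurable).mp h
  have hY2 : Integrable (fun p : ℝ × ℝ => p.2 ^ 2) P := by
    have h := gauss_integrable_sq m2 v2 h2
    rw [← hs] at h
    exact (integrable_map_measure (g := fun x : ℝ => x ^ 2)
      (measurable_id'.pow_const 2).aestronglyMeasurable
      measurable_snd.aemeasurable).mp h
  -- centered functions
  have hU : Integrable (fun p : ℝ × ℝ => (p.1 - m1) ^ 2) P := by
    have : Integrable (fun p : ℝ × ℝ => p.1 ^ 2 - (2 * m1) * p.1 + m1 ^ 2) P :=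
      ((hX2.sub (hX.const_mul _)).add (integrable_const _))
    exact this.congr (Filter.Eventually.of_forall fun p => by ring)
  have hW : Integrable (fun p : ℝ × ℝ => (p.2 - m2) ^ 2) P := by
    have : Integrable (fun p : ℝ × ℝ => p.2 ^ 2 - (2 * m2) * p.2 + m2 ^ 2) P :=
      ((hY2.sub (hY.const_mul _)).add (integrable_const _))
    exact this.congr (Filter.Eventually.of_forall fun p => by ring)
  have hUW : Integrable (fun p : ℝ × ℝ => (p.1 - m1) * (p.2 - m2)) P := by
    have hG : Integrable (fun p : ℝ × ℝ => ((p.1 - m1) ^ 2 + (p.2 - m2) ^ 2) / 2) P := by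
      exact (hU.add hW).div_const 2
    refine Integrable.mono' hG
      (((measurable_fst.sub_const m1).mul ((measurable_snd.sub_const m2))).aestronglyMeasurable)
      (Filter.Eventually.of_forall fun p => ?_)
    have h := sq_nonneg (|p.1 - m1| - |p.2 - m2|)
    rw [Real.norm_eq_abs, abs_mul]
    nlinarith [sq_abs (p.1 - m1), sq_abs (p.2 - m2), abs_nonneg (p.1 - m1), abs_nonneg (p.2 - m2)]
  -- integrals
  have hEX : ∫ p : ℝ × ℝ, p.1 ∂P = m1 := by
    have h := gauss_integral_id m1 v1 h1
    rw [← hf, integral_map measurable_fst.aemeasurable measurable_id'.aestronglyMeasurable] at h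
    exact h
  have hEY : ∫ p : ℝ × ℝ, p.2 ∂P = m2 := by
    have h := gauss_integral_id m2 v2 h2
    rw [← hs, integral_map measurable_snd.aemeasurable measurable_id'.aestronglyMeasurable] at h
    exact h
  have hEU2 : ∫ p : ℝ × ℝ, (p.1 - m1) ^ 2 ∂P = v1 := by
    have h := gauss_integral_sq_centered m1 v1 h1
    rw [← hf, integral_map measurable_fst.aemeasurable
      ((measurable_id'.sub_const m1).pow_const 2).aestronglyMeasurable] at h
    exact h
  have hEW2 : ∫ p : ℝ × ℝ, (p.2 - m2) ^ 2 ∂P = v2 := by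
    have h := gauss_integral_sq_centered m2 v2 h2
    rw [← hs, integral_map measurable_snd.aemeasurable
      ((measurable_id'.sub_const m2).pow_const 2).aestronglyMeasurable] at h
    exact h
  -- cross term bound
  set E := ∫ p : ℝ × ℝ, (p.1 - m1) * (p.2 - m2) ∂P with hE
  have hcross : E ≤ σ1 * σ2 := by
    have hnn : 0 ≤ ∫ p : ℝ × ℝ, (σ2 * (p.1 - m1) - σ1 * (p.2 - m2)) ^ 2 ∂P :=
      integral_nonneg fun p => sq_nonneg _
    have hexp : ∫ p : ℝ × ℝ, (σ2 * (p.1 - m1) - σ1 * (p.2 - m2)) ^ 2 ∂P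
        = σ2 ^ 2 * (v1:ℝ) + σ1 ^ 2 * (v2:ℝ) - 2 * σ1 * σ2 * E := by
      have heq : (fun p : ℝ × ℝ => (σ2 * (p.1 - m1) - σ1 * (p.2 - m2)) ^ 2)
          = fun p => (σ2 ^ 2 * (p.1 - m1) ^ 2 + σ1 ^ 2 * (p.2 - m2) ^ 2)
            - (2 * σ1 * σ2) * ((p.1 - m1) * (p.2 - m2)) := by
        ext p; ring
      have i1 : Integrable (fun p : ℝ × ℝ =>
          σ2 ^ 2 * (p.1 - m1) ^ 2 + σ1 ^ 2 * (p.2 - m2) ^ 2) P := by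
        exact (hU.const_mul _).add (hW.const_mul _)
      have i2 : Integrable (fun p : ℝ × ℝ =>
          2 * σ1 * σ2 * ((p.1 - m1) * (p.2 - m2))) P := by exact hUW.const_mul _
      rw [heq, integral_sub i1 i2,
        integral_add (hU.const_mul _) (hW.const_mul _), integral_const_mul _, integral_const_mul _,
        integral_const_mul _, hEU2, hEW2, ← hE]
    rw [hexp] at hnn
    nlinarith [mul_pos hσ1p hσ2p, hσ1sq, hσ2sq]
  -- main expansion
  have hmain : ∫ p : ℝ × ℝ, (p.1 - p.2) ^ 2 ∂P
      = (v1:ℝ) + (v2:ℝ) + (m1 - m2) ^ 2 - 2 * E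
        + 2 * (m1 - m2) * ((∫ p : ℝ × ℝ, p.1 ∂P) - m1)
        - 2 * (m1 - m2) * ((∫ p : ℝ × ℝ, p.2 ∂P) - m2) := by
    have heq : (fun p : ℝ × ℝ => (p.1 - p.2) ^ 2)
        = fun p => (((p.1 - m1) ^ 2 + (p.2 - m2) ^ 2) + ((m1 - m2) ^ 2
            + (2 * (m1 - m2)) * (p.1 - m1)))
          - ((2 * (m1 - m2)) * (p.2 - m2) + 2 * ((p.1 - m1) * (p.2 - m2))) := by
      ext p; ring
    have hU1 : Integrable (fun p : ℝ × ℝ => p.1 - m1) P := hX.sub (integrable_const _)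
    have hW1 : Integrable (fun p : ℝ × ℝ => p.2 - m2) P := hY.sub (integrable_const _)
    have iA : Integrable (fun p : ℝ × ℝ => (p.1 - m1) ^ 2 + (p.2 - m2) ^ 2) P := by
      exact hU.add hW
    have iB : Integrable (fun p : ℝ × ℝ =>
        (m1 - m2) ^ 2 + (2 * (m1 - m2)) * (p.1 - m1)) P := by
      exact (integrable_const _).add (hU1.const_mul _)
    have iAB : Integrable (fun p : ℝ × ℝ => ((p.1 - m1) ^ 2 + (p.2 - m2) ^ 2)
        + ((m1 - m2) ^ 2 + (2 * (m1 - m2)) * (p.1 - m1))) P := by exact iA.add iB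
    have iC : Integrable (fun p : ℝ × ℝ =>
        (2 * (m1 - m2)) * (p.2 - m2) + 2 * ((p.1 - m1) * (p.2 - m2))) P := by
      exact (hW1.const_mul _).add (hUW.const_mul _)
    rw [heq, integral_sub iAB iC,
      integral_add iA iB,
      integral_add hU hW, integral_add (integrable_const _) (hU1.const_mul _),
      integral_add (hW1.const_mul _) (hUW.const_mul _),
      integral_const_mul _, integral_const_mul _, integral_const_mul _,
      integral_sub hX (integrable_const _), integral_sub hY (integrable_const _),
      hEU2, hEW2, ← hE, integral_const]
    simp [measure_univ]
    ring
  rw [hmain, hEX, hEY]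
  have hs12 : σ1 * σ1 = v1 := Real.mul_self_sqrt hv1.le
  have hs22 : σ2 * σ2 = v2 := Real.mul_self_sqrt hv2.le
  nlinarith [hcross]

lemma W2sq_bddBelow (μ ν : Measure ℝ) :
    BddBelow {r : ℝ | ∃ Q : Measure (ℝ × ℝ), IsProbabilityMeasure Q ∧
      Q.map Prod.fst = μ ∧ Q.map Prod.snd = ν ∧ r = ∫ p : ℝ × ℝ, (p.1 - p.2) ^ 2 ∂Q} := by
  refine ⟨0, fun r hr => ?_⟩
  obtain ⟨P, _, _, _, hr⟩ := hr
  rw [hr]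
  exact integral_nonneg fun p => sq_nonneg _

lemma W2sq_gaussian_ge (m1 m2 : ℝ) (v1 v2 : ℝ≥0) (h1 : v1 ≠ 0) (h2 : v2 ≠ 0) :
    (m1 - m2) ^ 2 + (Real.sqrt v1 - Real.sqrt v2) ^ 2
      ≤ W2sq (gaussianReal m1 v1) (gaussianReal m2 v2) := by
  have hprod : IsProbabilityMeasure ((gaussianReal m1 v1).prod (gaussianReal m2 v2)) :=
    inferInstance
  refine le_csInf ⟨∫ p : ℝ × ℝ, (p.1 - p.2) ^ 2 ∂((gaussianReal m1 v1).prod (gaussianReal m2 v2)),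
    (gaussianReal m1 v1).prod (gaussianReal m2 v2), hprod, ?_, ?_, rfl⟩ ?_
  · rw [Measure.map_fst_prod]; simp [measure_univ]
  · rw [Measure.map_snd_prod]; simp [measure_univ]
  · rintro r ⟨P, hP, hfst, hsnd, rfl⟩
    exact coupling_cost_ge m1 m2 v1 v2 h1 h2 P hP hfst hsnd

lemma W2sq_gaussian_le (m1 m2 : ℝ) (v1 v2 : ℝ≥0) (h1 : v1 ≠ 0) (h2 : v2 ≠ 0) :
    W2sq (gaussianReal m1 v1) (gaussianReal m2 v2)
      ≤ (m1 - m2) ^ 2 + (Real.sqrt v1 - Real.sqrt v2) ^ 2 := by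
  have hv1 : (0:ℝ) < v1 := by exact_mod_cast pos_iff_ne_zero.mpr h1
  have hv2 : (0:ℝ) < v2 := by exact_mod_cast pos_iff_ne_zero.mpr h2
  set σ1 := Real.sqrt v1 with hσ1
  set σ2 := Real.sqrt v2 with hσ2
  have hσ1p : 0 < σ1 := Real.sqrt_pos.mpr hv1
  have hσ2p : 0 < σ2 := Real.sqrt_pos.mpr hv2
  set c := σ2 / σ1 with hc
  set d := m2 - c * m1 with hd
  set μ1 := gaussianReal m1 v1 with hμ1
  have hg : Measurable (fun x : ℝ => (x, c * x + d)) := by fun_prop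
  set P : Measure (ℝ × ℝ) := μ1.map (fun x => (x, c * x + d)) with hP
  have hprob : IsProbabilityMeasure P := Measure.isProbabilityMeasure_map hg.aemeasurable
  have hfst : P.map Prod.fst = μ1 := by
    rw [hP, Measure.map_map measurable_fst hg]
    exact Measure.map_id
  have hsnd : P.map Prod.snd = gaussianReal m2 v2 := by
    rw [hP, Measure.map_map measurable_snd hg]
    have hcomp : (Prod.snd ∘ fun x : ℝ => (x, c * x + d)) = (· + d) ∘ (c * ·) := by
      ext x; simp [Function.comp]
    have hadd : Measurable fun x : ℝ => x + d := by exact measurable_add_const d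
    have hmul : Measurable fun x : ℝ => c * x := by exact measurable_const_mul c
    rw [hcomp, ← Measure.map_map hadd hmul]
    have h1' : μ1.map (c * ·) = gaussianReal (c * m1) (⟨c^2, sq_nonneg _⟩ * v1) :=
      gaussianReal_map_const_mul (μ := m1) (v := v1) c
    have h2' : (⟨c ^ 2, sq_nonneg _⟩ * v1 : ℝ≥0) = v2 := by
      apply NNReal.coe_injective
      show (c ^ 2 : ℝ) * (v1 : ℝ) = v2
      rw [hc, div_pow, hσ1, hσ2, Real.sq_sqrt hv1.le, Real.sq_sqrt hv2.le]
      field_simp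
    rw [h1', h2', gaussianReal_map_add_const d]
    congr 1
    rw [hd]; ring
  have hcost : ∫ p : ℝ × ℝ, (p.1 - p.2) ^ 2 ∂P = (m1 - m2) ^ 2 + (σ1 - σ2) ^ 2 := by
    rw [hP, integral_map hg.aemeasurable
      (Measurable.aestronglyMeasurable (by measurability))]
    have heq : (fun x : ℝ => (x - (c * x + d)) ^ 2)
        = fun x => ((1 - c) ^ 2 * (x - m1) ^ 2
            + (2 * ((1 - c) * (m1 - m2))) * (x - m1)) + (m1 - m2) ^ 2 := by
      ext x; rw [hd]; ring
    have hU1 : Integrable (fun x : ℝ => x - m1) μ1 :=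
      (gauss_integrable_id m1 v1 h1).sub (integrable_const _)
    have hU2 : Integrable (fun x : ℝ => (x - m1) ^ 2) μ1 := by
      have : Integrable (fun x : ℝ => x ^ 2 - (2 * m1) * x + m1 ^ 2) μ1 :=
        ((gauss_integrable_sq m1 v1 h1).sub ((gauss_integrable_id m1 v1 h1).const_mul _)).add
          (integrable_const _)
      exact this.congr (Filter.Eventually.of_forall fun x => by ring)
    have hEU1 : ∫ x, (x - m1) ∂μ1 = 0 := by
      rw [integral_sub (gauss_integrable_id m1 v1 h1) (integrable_const _),
        gauss_integral_id m1 v1 h1, integral_const]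
      simp [measure_univ]
    calc ∫ x, (x - (c * x + d)) ^ 2 ∂μ1
        = ∫ x, ((1 - c) ^ 2 * (x - m1) ^ 2
            + (2 * ((1 - c) * (m1 - m2))) * (x - m1)) + (m1 - m2) ^ 2 ∂μ1 := by rw [heq]
      _ = (m1 - m2) ^ 2 + (σ1 - σ2) ^ 2 := by
          rw [integral_add (by exact (hU2.const_mul _).add (hU1.const_mul _)) (integrable_const _),
            integral_add (hU2.const_mul _) (hU1.const_mul _), integral_const_mul _,
            integral_const_mul _, gauss_integral_sq_centered m1 v1 h1, hEU1, integral_const]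
          have hval : (1 - c) ^ 2 * (v1:ℝ) = (σ1 - σ2) ^ 2 := by
            rw [hc, hσ1, ← Real.sq_sqrt hv1.le]
            field_simp
            rw [Real.sqrt_sq (Real.sqrt_nonneg _)]
          simp only [measure_univ, probReal_univ, ENNReal.toReal_one, smul_eq_mul, one_mul, mul_zero, add_zero]
          linarith [hval]
  have hmem : (m1 - m2) ^ 2 + (σ1 - σ2) ^ 2 ∈ {r : ℝ | ∃ Q : Measure (ℝ × ℝ),
      IsProbabilityMeasure Q ∧ Q.map Prod.fst = gaussianReal m1 v1 ∧
      Q.map Prod.snd = gaussianReal m2 v2 ∧ r = ∫ p : ℝ × ℝ, (p.1 - p.2) ^ 2 ∂Q} :=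
    ⟨P, hprob, hfst, hsnd, hcost.symm⟩
  exact csInf_le (W2sq_bddBelow _ _) hmem

lemma core_ineq (A B Q T S D : ℝ) (hA : 0 < A) (hB : 0 < B) (hQ : 0 < Q) (hT : 0 < T)
    (hS : 0 < S) (h1 : S ≤ 2 * Q ^ 2 + T) (h2 : A * B ≤ Q ^ 2 + T) (h3 : D + 2 * Q = A + B) :
    D - 2 * (T / Real.sqrt S) ≤ (Real.sqrt A - Real.sqrt B) ^ 2 := by
  have hQT : 0 < Q ^ 2 + T := by positivity
  have hsQT : Q ≤ Real.sqrt (Q ^ 2 + T) := by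
    have h := Real.sqrt_le_sqrt (show Q ^ 2 ≤ Q ^ 2 + T by linarith)
    rwa [Real.sqrt_sq hQ.le] at h
  have hsS : 0 < Real.sqrt S := Real.sqrt_pos.mpr hS
  have h2' : Real.sqrt S ≤ Real.sqrt (Q ^ 2 + T) + Q := by
    have hexp : (Real.sqrt (Q ^ 2 + T) + Q) ^ 2
        = (Q ^ 2 + T) + 2 * Q * Real.sqrt (Q ^ 2 + T) + Q ^ 2 := by
      rw [add_sq, Real.sq_sqrt hQT.le]; ring
    have hmul := mul_le_mul_of_nonneg_left hsQT hQ.le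
    have hQQ : Q ^ 2 = Q * Q := sq Q
    have hle : S ≤ (Real.sqrt (Q ^ 2 + T) + Q) ^ 2 := by nlinarith
    have := Real.sqrt_le_sqrt hle
    rwa [Real.sqrt_sq (by positivity)] at this
  have h3' : Real.sqrt (Q ^ 2 + T) - Q ≤ T / Real.sqrt S := by
    rw [le_div_iff₀ hsS]
    have hnn : 0 ≤ Real.sqrt (Q ^ 2 + T) - Q := by linarith
    calc (Real.sqrt (Q ^ 2 + T) - Q) * Real.sqrt S
        ≤ (Real.sqrt (Q ^ 2 + T) - Q) * (Real.sqrt (Q ^ 2 + T) + Q) :=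
          mul_le_mul_of_nonneg_left h2' hnn
      _ = T := by linear_combination Real.sq_sqrt hQT.le
  have h4' : Real.sqrt (A * B) ≤ Real.sqrt (Q ^ 2 + T) := Real.sqrt_le_sqrt h2
  have h5' : (Real.sqrt A - Real.sqrt B) ^ 2 = A + B - 2 * Real.sqrt (A * B) := by
    have hM : Real.sqrt A * Real.sqrt B = Real.sqrt (A * B) := (Real.sqrt_mul hA.le B).symm
    rw [sub_sq, Real.sq_sqrt hA.le, Real.sq_sqrt hB.le]
    linear_combination (-2 : ℝ) * hM
  linarith

/-- For all means `m_a, m_b, m_γ ∈ ℝ`, standard deviations `σ_a, σ_b, σ_γ > 0`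
and weights `p_a, p_b ∈ (0, 1]`:
`W₂²(N(m_a + m_γ, σ_a² + p_a²σ_γ²), N(m_b + m_γ, σ_b² + p_b²σ_γ²))
  ≥ W₂²(N(m_a, σ_a²), N(m_b, σ_b²)) + σ_γ²·(p_a − p_b)²
    − 2·((σ_a p_b σ_γ)² + (p_a σ_b σ_γ)²)
      / √(2(σ_a σ_b)² + 2(p_a p_b σ_γ²)² + (σ_a p_b σ_γ)² + (p_a σ_b σ_γ)²)`. -/
theorem gaussian_interpolation_lower_bound
    (ma mb mγ : ℝ) (σa σb σγ : ℝ) (hσa : 0 < σa) (hσb : 0 < σb) (hσγ : 0 < σγ)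
    (pa pb : ℝ) (hpa : pa ∈ Set.Ioc (0 : ℝ) 1) (hpb : pb ∈ Set.Ioc (0 : ℝ) 1) :
    W2sq (gaussianReal (ma + mγ) ((σa ^ 2 + pa ^ 2 * σγ ^ 2).toNNReal))
        (gaussianReal (mb + mγ) ((σb ^ 2 + pb ^ 2 * σγ ^ 2).toNNReal))
      ≥ W2sq (gaussianReal ma ((σa ^ 2).toNNReal)) (gaussianReal mb ((σb ^ 2).toNNReal))
        + σγ ^ 2 * (pa - pb) ^ 2
        - 2 * (((σa * pb * σγ) ^ 2 + (pa * σb * σγ) ^ 2)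
            / Real.sqrt (2 * (σa * σb) ^ 2 + 2 * (pa * pb * σγ ^ 2) ^ 2
                + (σa * pb * σγ) ^ 2 + (pa * σb * σγ) ^ 2)) := by
  obtain ⟨hpa0, hpa1⟩ := hpa
  obtain ⟨hpb0, hpb1⟩ := hpb
  set A := σa ^ 2 + pa ^ 2 * σγ ^ 2 with hA_def
  set B := σb ^ 2 + pb ^ 2 * σγ ^ 2 with hB_def
  have hA : 0 < A := by positivity
  have hB : 0 < B := by positivity
  have hAne : A.toNNReal ≠ 0 := by
    simp [Real.toNNReal_eq_zero, not_le, hA]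
  have hBne : B.toNNReal ≠ 0 := by
    simp [Real.toNNReal_eq_zero, not_le, hB]
  have hane : (σa ^ 2).toNNReal ≠ 0 := by
    simp [Real.toNNReal_eq_zero, not_le]; positivity
  have hbne : (σb ^ 2).toNNReal ≠ 0 := by
    simp [Real.toNNReal_eq_zero, not_le]; positivity
  have hcA : ((A.toNNReal : ℝ≥0) : ℝ) = A := Real.coe_toNNReal _ hA.le
  have hcB : ((B.toNNReal : ℝ≥0) : ℝ) = B := Real.coe_toNNReal _ hB.le
  have hca : (((σa ^ 2).toNNReal : ℝ≥0) : ℝ) = σa ^ 2 := Real.coe_toNNReal _ (by positivity)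
  have hcb : (((σb ^ 2).toNNReal : ℝ≥0) : ℝ) = σb ^ 2 := Real.coe_toNNReal _ (by positivity)
  have hlow := W2sq_gaussian_ge (ma + mγ) (mb + mγ) A.toNNReal B.toNNReal hAne hBne
  rw [hcA, hcB] at hlow
  have hup := W2sq_gaussian_le ma mb (σa ^ 2).toNNReal (σb ^ 2).toNNReal hane hbne
  rw [hca, hcb, Real.sqrt_sq hσa.le, Real.sqrt_sq hσb.le] at hup
  have hmm : ma + mγ - (mb + mγ) = ma - mb := by ring
  rw [hmm] at hlow
  -- algebraic core
  set T := (σa * pb * σγ) ^ 2 + (pa * σb * σγ) ^ 2 with hT_def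
  set S := 2 * (σa * σb) ^ 2 + 2 * (pa * pb * σγ ^ 2) ^ 2
      + (σa * pb * σγ) ^ 2 + (pa * σb * σγ) ^ 2 with hS_def
  set Q := σa * σb + pa * pb * σγ ^ 2 with hQ_def
  have hT : 0 < T := by positivity
  have hS : 0 < S := by positivity
  have hQ : 0 < Q := by positivity
  have h1 : S ≤ 2 * Q ^ 2 + T := by
    have hkey : 2 * Q ^ 2 + T - S = 4 * (σa * σb) * (pa * pb * σγ ^ 2) := by
      rw [hS_def, hQ_def, hT_def]; ring
    have hkey2 : (0:ℝ) ≤ 4 * (σa * σb) * (pa * pb * σγ ^ 2) := by positivity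
    linarith
  have h2 : A * B ≤ Q ^ 2 + T := by
    have hkey : Q ^ 2 + T - A * B = 2 * (σa * σb) * (pa * pb * σγ ^ 2) := by
      rw [hA_def, hB_def, hQ_def, hT_def]; ring
    have hkey2 : (0:ℝ) ≤ 2 * (σa * σb) * (pa * pb * σγ ^ 2) := by positivity
    linarith
  have h3 : ((σa - σb) ^ 2 + σγ ^ 2 * (pa - pb) ^ 2) + 2 * Q = A + B := by
    rw [hA_def, hB_def, hQ_def]; ring
  have hcore := core_ineq A B Q T S ((σa - σb) ^ 2 + σγ ^ 2 * (pa - pb) ^ 2)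
    hA hB hQ hT hS h1 h2 h3
  linarith [hlow, hup, hcore]
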